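/- Let 0 < c < 1 and d > 2⌊log₂(1/c)⌋ + 4. If P is a subpath of P_d with |V(P)| ≥ c·|V(G_d)|, then V(P) ∩ S_j ≠ ∅ for every j with ⌊log₂(1/c)⌋ + 3 ≤ j ≤ d. -/

import Mathlib

open SimpleGraph

/-- Sorted list of the tuple set `S^d`: tuples with entries in {1,3} except
the last entry which is in {1,2,3,4}, of length between 1 and `d`,
listed in lexicographic order. -/
def Tl : ℕ → List (List ℕ)
  | 0 => []
  | k+1 => [[1]] ++ (Tl k).map (fun a => 1 :: a) ++ [[2], [3]]
            ++ (Tl k).map (fun a => 3 :: a) ++ [[4]]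

/-- Strict lexicographic order on tuples (a proper prefix is smaller). -/
def lexLt (a b : List ℕ) : Prop := List.Lex (· < ·) a b

def lexLe (a b : List ℕ) : Prop := a = b ∨ lexLt a b

/-- `v` is the successor of `u` in the lexicographic order on `S^d`. -/
def IsSucc (d : ℕ) (u v : List ℕ) : Prop :=
  v ∈ Tl d ∧ lexLt u v ∧ ∀ w ∈ Tl d, lexLt u w → lexLe v w

/-- The interval `[a,b]` in `S^d`. -/
def interval (d : ℕ) (a b : List ℕ) : Set (List ℕ) :=
  {c | c ∈ Tl d ∧ lexLe a c ∧ lexLe c b}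

/-- `[a,b]` is a proper interval: no interior element has length `l(a)` or `l(b)`. -/
def ProperInterval (d : ℕ) (a b : List ℕ) : Prop :=
  a ∈ Tl d ∧ b ∈ Tl d ∧ lexLe a b ∧
  ∀ c ∈ interval d a b, c ≠ a → c ≠ b →
    c.length ≠ a.length ∧ c.length ≠ b.length

/-- The set of left endpoints of flat steps of the interval `[a,b]`. -/
def flatSteps (d : ℕ) (a b : List ℕ) : Set (List ℕ) :=
  {c | c ∈ Tl d ∧ lexLe a c ∧ lexLt c b ∧ ∃ v, IsSucc d c v ∧ v.length = c.length}

/-- Vertices of `G_d`: elements of `S^d`, subdivision vertices, and centers. -/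
inductive Vtx where
  | elt : List ℕ → Vtx
  | sub : ℕ → Fin 2 → Vtx
  | ctr : ℕ → Vtx
deriving DecidableEq

/-- The path `P_d` as a list of vertices: the elements of `S^d` in order,
with two subdivision vertices between consecutive elements of equal length
and one otherwise. -/
def pathList (d : ℕ) : List Vtx :=
  ((Tl d).zipIdx.map Prod.swap).flatMap (fun p =>
    Vtx.elt p.2 :: (match (Tl d)[p.1 + 1]? with
      | none => []
      | some b =>
        if p.2.length = b.length then [Vtx.sub p.1 0, Vtx.sub p.1 1]
        else [Vtx.sub p.1 0]))

/-- `x` and `y` are consecutive in the list `l`. -/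
def ChainAdj {α : Type} (l : List α) (x y : α) : Prop :=
  ∃ i : ℕ, (l[i]? = some x ∧ l[i+1]? = some y) ∨
       (l[i]? = some y ∧ l[i+1]? = some x)

/-- Adjacency from a center vertex. -/
def ctrAdj (d : ℕ) : Vtx → Vtx → Prop
  | Vtx.ctr k, Vtx.ctr m => k ≠ m ∧ 1 ≤ k ∧ k ≤ d ∧ 1 ≤ m ∧ m ≤ d
  | Vtx.ctr k, Vtx.elt a => 1 ≤ k ∧ k ≤ d ∧ a ∈ Tl d ∧ a.length = k
  | _, _ => False

/-- The vertex set of `G_d`. -/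
def VSet (d : ℕ) : Finset Vtx :=
  (pathList d).toFinset ∪ (Finset.Icc 1 d).image Vtx.ctr

def GdAdj (d : ℕ) (x y : Vtx) : Prop :=
  x ≠ y ∧ (ChainAdj (pathList d) x y ∨ ctrAdj d x y ∨ ctrAdj d y x)

/-- The graph `G_d`. -/
def Gd (d : ℕ) : SimpleGraph {x // x ∈ VSet d} where
  Adj x y := GdAdj d x.1 y.1
  symm := ⟨by
    rintro x y ⟨hne, h⟩
    refine ⟨hne.symm, ?_⟩
    rcases h with ⟨i, hi⟩ | h | h
    · exact Or.inl ⟨i, hi.symm⟩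
    · exact Or.inr (Or.inr h)
    · exact Or.inr (Or.inl h)⟩
  loopless := ⟨fun x h => h.1 rfl⟩

/-- A rank decomposition of a graph `G`: a finite cubic tree together with a
bijection from the vertices of `G` to the leaves of the tree. -/
structure RankDecomp {V : Type} [Fintype V] (G : SimpleGraph V) where
  t : Type
  fin : Fintype t
  tree : SimpleGraph t
  conn : tree.Connected
  acyc : tree.IsAcyclic
  two_le : 2 ≤ Nat.card t
  cubic : ∀ v : t, (tree.neighborSet v).ncard = 1 ∨ (tree.neighborSet v).ncard = 3
  leafEquiv : V ≃ {v : t // (tree.neighborSet v).ncard = 1}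

/-- The set of vertices of `G` whose leaf lies on the side of `a` of
the edge `ab` of the decomposition tree. -/
def RankDecomp.side {V : Type} [Fintype V] {G : SimpleGraph V}
    (D : RankDecomp G) (a b : D.t) : Set V :=
  {x | (D.tree.deleteEdges {s(a, b)}).Reachable (D.leafEquiv x).1 a}

/-- The cutrank function of `G`: the GF(2)-rank of the adjacency submatrix
between `X` and its complement. -/
noncomputable def cutRank {V : Type} [Fintype V] (G : SimpleGraph V) (X : Set V) : ℕ :=
  haveI : Fintype ↥X := Fintype.ofFinite _
  haveI : Fintype ↥(Xᶜ) := Fintype.ofFinite _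
  haveI : DecidableRel G.Adj := Classical.decRel _
  Matrix.rank (Matrix.of (fun (x : ↥X) (y : ↥(Xᶜ)) =>
    if G.Adj x.1 y.1 then (1 : ZMod 2) else 0))

/-- The decomposition `D` has width at most `k`. -/
def RankDecomp.WidthLE {V : Type} [Fintype V] {G : SimpleGraph V}
    (D : RankDecomp G) (k : ℕ) : Prop :=
  ∀ a b : D.t, D.tree.Adj a b → cutRank G (D.side a b) ≤ k

/-- The rank-width of `G`. -/
noncomputable def rankwidth {V : Type} [Fintype V] (G : SimpleGraph V) : ℕ :=
  sInf {k | ∃ D : RankDecomp G, D.WidthLE k}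

/-- `l` is an induced path in `G`: its vertices are distinct and two of them
are adjacent in `G` iff they are consecutive on `l`. -/
def IsInducedPathList {V : Type} (G : SimpleGraph V) (l : List V) : Prop :=
  l.Nodup ∧ ∀ x ∈ l, ∀ y ∈ l, (G.Adj x y ↔ ChainAdj l x y)

/-- The diamond: the complete graph on four vertices minus an edge. -/
def diamond : SimpleGraph (Fin 4) := (⊤ : SimpleGraph (Fin 4)).deleteEdges {s(2, 3)}

section Aux

lemma Tl_succ (k : ℕ) : Tl (k+1) =
    [1] :: ((Tl k).map (fun a => 1 :: a) ++
      ([2] :: [3] :: ((Tl k).map (fun a => 3 :: a) ++ [[4]]))) := by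
  simp [Tl]

lemma mem_Tl_length : ∀ d, ∀ a ∈ Tl d, 1 ≤ a.length ∧ a.length ≤ d := by
  intro d
  induction d with
  | zero => intro a ha; simp [Tl] at ha
  | succ k ih =>
    intro a ha
    rw [Tl_succ] at ha
    simp only [List.mem_cons, List.mem_append, List.mem_map, List.mem_singleton] at ha
    rcases ha with rfl | ⟨b, hb, rfl⟩ | rfl | rfl | ⟨b, hb, rfl⟩ | (rfl | h)
    · simp
    · have := ih b hb; simp; omega
    · simp
    · simp
    · have := ih b hb; simp; omega
    · simp
    · simp at h

lemma exists_mem_Tl : ∀ d j, 1 ≤ j → j ≤ d → ∃ a ∈ Tl d, a.length = j := by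
  intro d
  induction d with
  | zero => intro j h1 h2; omega
  | succ k ih =>
    intro j h1 h2
    rcases Nat.eq_or_lt_of_le h1 with h | h
    · exact ⟨[1], by rw [Tl_succ]; simp, by simp [← h]⟩
    · obtain ⟨a, ha, hlen⟩ := ih (j-1) (by omega) (by omega)
      refine ⟨1 :: a, ?_, by simp [hlen]; omega⟩
      rw [Tl_succ]
      exact List.mem_cons_of_mem _ (List.mem_append_left _ (List.mem_map_of_mem ha))

lemma length_Tl : ∀ d, (Tl d).length = 2^(d+2) - 4 := by
  intro d
  induction d with
  | zero => simp [Tl]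
  | succ k ih =>
    have h4 : 4 ≤ 2^(k+2) := by
      calc 4 = 2^2 := by norm_num
      _ ≤ 2^(k+2) := Nat.pow_le_pow_right (by norm_num) (by omega)
    have hp : 2^(k+1+2) = 2 * 2^(k+2) := by ring
    simp [Tl, ih]
    omega

lemma nil_not_mem_Tl (d : ℕ) : [] ∉ Tl d := by
  intro h
  have := (mem_Tl_length d [] h).1
  simp at this

lemma nodup_Tl : ∀ d, (Tl d).Nodup := by
  intro d
  induction d with
  | zero => simp [Tl]
  | succ k ih =>
    have hinj1 : Function.Injective (fun a : List ℕ => 1 :: a) := fun a b h => by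
      simpa using h
    have hinj3 : Function.Injective (fun a : List ℕ => 3 :: a) := fun a b h => by
      simpa using h
    rw [Tl_succ]
    refine List.nodup_cons.mpr ⟨?_, ?_⟩
    · simp only [List.mem_append, List.mem_map, List.mem_cons, List.mem_singleton]
      rintro (⟨b, hb, hh⟩ | h | h | ⟨b, hb, hh⟩ | h) <;> simp_all
      · exact nil_not_mem_Tl k hb
    · rw [List.nodup_append]
      refine ⟨ih.map hinj1, ?_, ?_⟩
      · refine List.nodup_cons.mpr ⟨?_, List.nodup_cons.mpr ⟨?_, ?_⟩⟩
        · simp only [List.mem_cons, List.mem_append, List.mem_map, List.mem_singleton]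
          rintro (h | ⟨b, hb, hh⟩ | h) <;> simp_all
        · simp only [List.mem_append, List.mem_map, List.mem_singleton]
          rintro (⟨b, hb, hh⟩ | h) <;> simp_all
          exact nil_not_mem_Tl k hb
        · rw [List.nodup_append]
          refine ⟨ih.map hinj3, by simp, ?_⟩
          intro x hx y hx4
          simp only [List.mem_map] at hx
          obtain ⟨b, hb, rfl⟩ := hx
          simp only [List.mem_singleton] at hx4
          have := nil_not_mem_Tl k
          simp_all
      · intro x hx y hy
        simp only [List.mem_map] at hx
        obtain ⟨b, hb, rfl⟩ := hx
        simp only [List.mem_cons, List.mem_append, List.mem_map, List.mem_singleton] at hy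
        rcases hy with h | h | ⟨b2, hb2, rfl⟩ | h <;> simp_all

end Aux

lemma infix_append_cases {α : Type*} {l x y : List α} (h : l <:+: x ++ y) :
    l <:+: x ∨ l <:+: y ∨ ∃ l1 l2, l = l1 ++ l2 ∧ l1 <:+ x ∧ l2 <+: y := by
  obtain ⟨s, u, h⟩ := h
  rw [List.append_assoc] at h
  rcases List.append_eq_append_iff.mp h with ⟨a', hx, hlu⟩ | ⟨c', hs, hy⟩
  · rcases List.append_eq_append_iff.mp hlu with ⟨b', ha', hu⟩ | ⟨l2, hl, hy2⟩
    · exact Or.inl ⟨s, b', by rw [hx, ha', List.append_assoc]⟩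
    · exact Or.inr (Or.inr ⟨a', l2, hl, ⟨s, hx.symm⟩, ⟨u, hy2.symm⟩⟩)
  · exact Or.inr (Or.inl ⟨c', u, by rw [← List.append_assoc] at hy; exact hy.symm⟩)

lemma prefix_append_cases {α : Type*} {l x y : List α} (h : l <+: x ++ y) :
    l <+: x ∨ ∃ l2, l = x ++ l2 ∧ l2 <+: y := by
  rcases List.prefix_or_prefix_of_prefix h (List.prefix_append x y) with h1 | h1
  · exact Or.inl h1
  · obtain ⟨l2, rfl⟩ := h1
    obtain ⟨u, hu⟩ := h
    right
    refine ⟨l2, rfl, ⟨u, ?_⟩⟩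
    rw [List.append_assoc] at hu
    exact (List.append_cancel_left hu)

lemma suffix_append_cases {α : Type*} {l x y : List α} (h : l <:+ x ++ y) :
    l <:+ y ∨ ∃ l1, l = l1 ++ y ∧ l1 <:+ x := by
  obtain ⟨s, h⟩ := h
  rcases List.append_eq_append_iff.mp h with ⟨a', hx, hl⟩ | ⟨c', hs, hy⟩
  · exact Or.inr ⟨a', hl, ⟨s, hx.symm⟩⟩
  · exact Or.inl ⟨c', hy.symm⟩

lemma prefix_map_ex {α β : Type*} (f : α → β) {t : List β} {xs : List α}
    (h : t <+: List.map f xs) : ∃ t', t' <+: xs ∧ t = t'.map f := by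
  obtain ⟨u, hu⟩ := h
  obtain ⟨l1, l2, rfl, h1, h2⟩ := List.append_eq_map_iff.mp hu
  exact ⟨l1, ⟨l2, rfl⟩, h1.symm⟩

lemma suffix_map_ex {α β : Type*} (f : α → β) {t : List β} {xs : List α}
    (h : t <:+ List.map f xs) : ∃ t', t' <:+ xs ∧ t = t'.map f := by
  obtain ⟨s, hs⟩ := h
  obtain ⟨l1, l2, rfl, h1, h2⟩ := List.append_eq_map_iff.mp hs
  exact ⟨l2, ⟨l1, rfl⟩, h2.symm⟩

lemma infix_map_ex {α β : Type*} (f : α → β) {t : List β} {xs : List α}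
    (h : t <:+: List.map f xs) : ∃ t', t' <:+: xs ∧ t = t'.map f := by
  obtain ⟨s, u, h⟩ := h
  rw [List.append_assoc] at h
  obtain ⟨l1, l2, rfl, h1, h2⟩ := List.append_eq_map_iff.mp h
  obtain ⟨y1, y2, rfl, h3, h4⟩ := List.append_eq_map_iff.mp h2.symm
  exact ⟨y1, ⟨l1, y2, by rw [List.append_assoc]⟩, h3.symm⟩

lemma tl_prefix_bound : ∀ d, ∀ j t, 1 ≤ j → j ≤ d → t <+: Tl d →
    (∀ a ∈ t, a.length ≠ j) → t.length + 1 ≤ j := by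
  intro d
  induction d with
  | zero => intro j t h1 h2 _ _; omega
  | succ k ih =>
    intro j t h1 h2 hpre hav
    rw [Tl_succ] at hpre
    rcases t with _ | ⟨b, t'⟩
    · simpa using h1
    · rw [List.cons_prefix_cons] at hpre
      obtain ⟨rfl, hpre⟩ := hpre
      have hj2 : 2 ≤ j := by
        have := hav [1] (List.mem_cons_self)
        simp at this; omega
      rcases prefix_append_cases hpre with hA | ⟨t2, rfl, ht2⟩
      · obtain ⟨t'', ht''pre, rfl⟩ := prefix_map_ex _ hA
        have hb : t''.length + 1 ≤ j - 1 := by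
          refine ih (j-1) t'' (by omega) (by omega) ht''pre ?_
          intro a ha
          have := hav (1 :: a) (List.mem_cons_of_mem _ (List.mem_map_of_mem ha))
          simp at this; omega
        simp only [List.length_cons, List.length_map]
        omega
      · exfalso
        obtain ⟨a, haT, halen⟩ := exists_mem_Tl k (j-1) (by omega) (by omega)
        have hmem : (1 :: a) ∈ [1] :: ((Tl k).map (fun a => 1 :: a) ++ t2) :=
          List.mem_cons_of_mem _ (List.mem_append_left _ (List.mem_map_of_mem haT))
        have := hav (1 :: a) hmem
        simp at this; omega

lemma tl_suffix_bound : ∀ d, ∀ j t, 1 ≤ j → j ≤ d → t <:+ Tl d →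
    (∀ a ∈ t, a.length ≠ j) → t.length + 1 ≤ j := by
  intro d
  induction d with
  | zero => intro j t h1 h2 _ _; omega
  | succ k ih =>
    intro j t h1 h2 hsuf hav
    have hshape : Tl (k+1) = ([[1]] ++ (Tl k).map (fun a => 1 :: a) ++ [[2], [3]]
        ++ (Tl k).map (fun a => 3 :: a)) ++ [[4]] := by
      simp [Tl]
    rw [hshape] at hsuf
    rcases suffix_append_cases hsuf with h4 | ⟨t1, rfl, ht1⟩
    · rcases List.suffix_cons_iff.mp h4 with rfl | h
      · have := hav [4] (by simp)
        simp at this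
        simp only [List.length_cons, List.length_nil]
        omega
      · have : t = [] := List.eq_nil_of_suffix_nil h
        subst this; simpa using h1
    · have hj2 : 2 ≤ j := by
        have := hav [4] (by simp)
        simp at this; omega
      rcases suffix_append_cases ht1 with hB | ⟨t1', rfl, _⟩
      · obtain ⟨t'', ht''suf, rfl⟩ := suffix_map_ex _ hB
        have hb : t''.length + 1 ≤ j - 1 := by
          refine ih (j-1) t'' (by omega) (by omega) ht''suf ?_
          intro a ha
          have := hav (3 :: a) (List.mem_append_left _ (List.mem_map_of_mem ha))
          simp at this; omega
        simp only [List.length_append, List.length_map, List.length_cons, List.length_nil]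
        omega
      · exfalso
        obtain ⟨a, haT, halen⟩ := exists_mem_Tl k (j-1) (by omega) (by omega)
        have := hav (3 :: a)
          (List.mem_append_left _ (List.mem_append_right _ (List.mem_map_of_mem haT)))
        simp at this; omega

lemma tl_pref23_bound (k j : ℕ) (h1 : 1 ≤ j) (h2 : j ≤ k + 1) (t : List (List ℕ))
    (hp : t <+: [2] :: [3] :: ((Tl k).map (fun a => 3 :: a) ++ [[4]]))
    (hav : ∀ a ∈ t, a.length ≠ j) : t = [] ∨ (2 ≤ j ∧ t.length ≤ j) := by
  rcases t with _ | ⟨b, t3⟩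
  · exact Or.inl rfl
  rw [List.cons_prefix_cons] at hp
  obtain ⟨rfl, hp⟩ := hp
  have hj2 : 2 ≤ j := by
    have := hav [2] (List.mem_cons_self)
    simp at this; omega
  refine Or.inr ⟨hj2, ?_⟩
  rcases t3 with _ | ⟨b2, t4⟩
  · simp; omega
  rw [List.cons_prefix_cons] at hp
  obtain ⟨rfl, hp⟩ := hp
  rcases prefix_append_cases hp with hB | ⟨t5, rfl, _⟩
  · obtain ⟨t'', hpre, rfl⟩ := prefix_map_ex _ hB
    have hb : t''.length + 1 ≤ j - 1 := by
      refine tl_prefix_bound k (j-1) t'' (by omega) (by omega) hpre ?_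
      intro a ha
      have := hav (3 :: a)
        (List.mem_cons_of_mem _ (List.mem_cons_of_mem _ (List.mem_map_of_mem ha)))
      simp at this; omega
    simp only [List.length_cons, List.length_map]
    omega
  · exfalso
    obtain ⟨a, haT, halen⟩ := exists_mem_Tl k (j-1) (by omega) (by omega)
    have := hav (3 :: a)
      (List.mem_cons_of_mem _ (List.mem_cons_of_mem _
        (List.mem_append_left _ (List.mem_map_of_mem haT))))
    simp at this; omega

lemma tl_infix_bound : ∀ d, ∀ j t, 1 ≤ j → j ≤ d → t <:+: Tl d →
    (∀ a ∈ t, a.length ≠ j) → t.length ≤ max (4 * (2^(d-j) - 1)) (2*j - 2) := by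
  intro d
  induction d with
  | zero => intro j t h1 h2 _ _; omega
  | succ k ih =>
    intro j t h1 h2 hinf hav
    have hTlk : (Tl k).length = 2^(k+2) - 4 := length_Tl k
    have hpow : 2^(k+2) = 4 * 2^k := by ring
    have hone : (1:ℕ) ≤ 2^k := Nat.one_le_two_pow
    rw [Tl_succ] at hinf
    rcases List.infix_cons_iff.mp hinf with hpre | hinf2
    · have := tl_prefix_bound (k+1) j t h1 h2 (by rw [Tl_succ]; exact hpre) hav
      exact le_max_iff.mpr (Or.inr (by omega))
    rcases infix_append_cases hinf2 with hA | hrest | ⟨t1, t2, rfl, hs, hp⟩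
    · obtain ⟨t', ht', rfl⟩ := infix_map_ex _ hA
      by_cases hj : j = 1
      · subst hj
        have hlen' : t'.length ≤ (Tl k).length := ht'.length_le
        refine le_max_iff.mpr (Or.inl ?_)
        simp only [List.length_map, Nat.add_sub_cancel]
        omega
      · have hb := ih (j-1) t' (by omega) (by omega) ht' ?_
        · have hkj : k - (j-1) = k+1-j := by omega
          rw [hkj] at hb
          simp only [List.length_map]
          rcases le_max_iff.mp hb with h | h
          · exact le_max_iff.mpr (Or.inl h)
          · exact le_max_iff.mpr (Or.inr (by omega))
        · intro a ha
          have := hav (1 :: a) (List.mem_map_of_mem ha)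
          simp at this; omega
    · rcases List.infix_cons_iff.mp hrest with hpre2 | hrest2
      · rcases tl_pref23_bound k j h1 (by omega) t hpre2 hav with rfl | ⟨hj2, hlen2⟩
        · simp
        · exact le_max_iff.mpr (Or.inr (by omega))
      rcases List.infix_cons_iff.mp hrest2 with hpre3 | hrest3
      · -- t <+: [3] :: (B ++ [[4]])
        rcases t with _ | ⟨b, t4⟩
        · simp
        rw [List.cons_prefix_cons] at hpre3
        obtain ⟨rfl, hp4⟩ := hpre3
        have hj2 : 2 ≤ j := by
          have := hav [3] (List.mem_cons_self)
          simp at this; omega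
        rcases prefix_append_cases hp4 with hB | ⟨t5, rfl, _⟩
        · obtain ⟨t'', hpre, rfl⟩ := prefix_map_ex _ hB
          have hb : t''.length + 1 ≤ j - 1 := by
            refine tl_prefix_bound k (j-1) t'' (by omega) (by omega) hpre ?_
            intro a ha
            have := hav (3 :: a) (List.mem_cons_of_mem _ (List.mem_map_of_mem ha))
            simp at this; omega
          refine le_max_iff.mpr (Or.inr ?_)
          simp only [List.length_cons, List.length_map]
          omega
        · exfalso
          obtain ⟨a, haT, halen⟩ := exists_mem_Tl k (j-1) (by omega) (by omega)
          have := hav (3 :: a)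
            (List.mem_cons_of_mem _ (List.mem_append_left _ (List.mem_map_of_mem haT)))
          simp at this; omega
      · rcases infix_append_cases hrest3 with hB | h4 | ⟨t1, t2, rfl, hs, hp⟩
        · obtain ⟨t', ht', rfl⟩ := infix_map_ex _ hB
          by_cases hj : j = 1
          · subst hj
            have hlen' : t'.length ≤ (Tl k).length := ht'.length_le
            refine le_max_iff.mpr (Or.inl ?_)
            simp only [List.length_map, Nat.add_sub_cancel]
            omega
          · have hb := ih (j-1) t' (by omega) (by omega) ht' ?_
            · have hkj : k - (j-1) = k+1-j := by omega
              rw [hkj] at hb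
              simp only [List.length_map]
              rcases le_max_iff.mp hb with h | h
              · exact le_max_iff.mpr (Or.inl h)
              · exact le_max_iff.mpr (Or.inr (by omega))
            · intro a ha
              have := hav (3 :: a) (List.mem_map_of_mem ha)
              simp at this; omega
        · -- t <:+: [[4]]
          have hle : t.length ≤ 1 := h4.length_le
          rcases t with _ | ⟨b, t5⟩
          · simp
          · have hb4 : b = [4] := by
              have := h4.subset (List.mem_cons_self)
              simpa using this
            subst hb4
            have hj2 : 2 ≤ j := by
              have := hav [4] (List.mem_cons_self)
              simp at this; omega
            refine le_max_iff.mpr (Or.inr ?_)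
            simp only [List.length_cons] at hle ⊢
            omega
        · -- t = t1 ++ t2, t1 <:+ B, t2 <+: [[4]]
          obtain ⟨t1', hsuf, rfl⟩ := suffix_map_ex _ hs
          have ht2 : t2 = [] ∨ t2 = [[4]] := by
            rcases t2 with _ | ⟨b, t5⟩
            · exact Or.inl rfl
            · rw [List.cons_prefix_cons] at hp
              obtain ⟨rfl, hp⟩ := hp
              have : t5 = [] := List.eq_nil_of_prefix_nil hp
              subst this; exact Or.inr rfl
          by_cases hj : j = 1
          · subst hj
            have ht2nil : t2 = [] := by
              rcases ht2 with rfl | rfl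
              · rfl
              · exfalso
                have := hav [4] (List.mem_append_right _ (List.mem_cons_self))
                simp at this
            subst ht2nil
            have hlen' : t1'.length ≤ (Tl k).length := hsuf.length_le
            refine le_max_iff.mpr (Or.inl ?_)
            simp only [List.length_append, List.length_map, List.length_nil, Nat.add_sub_cancel]
            omega
          · have hj2 : 2 ≤ j := by omega
            have hb : t1'.length + 1 ≤ j - 1 := by
              refine tl_suffix_bound k (j-1) t1' (by omega) (by omega) hsuf ?_
              intro a ha
              have := hav (3 :: a) (List.mem_append_left _ (List.mem_map_of_mem ha))
              simp at this; omega
            have ht2len : t2.length ≤ 1 := by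
              rcases ht2 with rfl | rfl <;> simp
            refine le_max_iff.mpr (Or.inr ?_)
            simp only [List.length_append, List.length_map]
            omega
    · -- middle: t1 <:+ A, t2 <+: [2]::[3]::(B++[[4]])
      obtain ⟨t1', hsuf, rfl⟩ := suffix_map_ex _ hs
      rcases tl_pref23_bound k j h1 (by omega) t2 hp
        (fun a ha => hav a (List.mem_append_right _ ha)) with rfl | ⟨hj2, hlen2⟩
      · by_cases hj : j = 1
        · subst hj
          have hlen' : t1'.length ≤ (Tl k).length := hsuf.length_le
          refine le_max_iff.mpr (Or.inl ?_)
          simp only [List.length_append, List.length_map, List.length_nil, Nat.add_sub_cancel]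
          omega
        · have hb : t1'.length + 1 ≤ j - 1 := by
            refine tl_suffix_bound k (j-1) t1' (by omega) (by omega) hsuf ?_
            intro a ha
            have := hav (1 :: a) (List.mem_append_left _ (List.mem_map_of_mem ha))
            simp at this; omega
          refine le_max_iff.mpr (Or.inr ?_)
          simp only [List.length_append, List.length_map, List.length_nil]
          omega
      · have hb : t1'.length + 1 ≤ j - 1 := by
          refine tl_suffix_bound k (j-1) t1' (by omega) (by omega) hsuf ?_
          intro a ha
          have := hav (1 :: a) (List.mem_append_left _ (List.mem_map_of_mem ha))
          simp at this; omega
        refine le_max_iff.mpr (Or.inr ?_)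
        simp only [List.length_append, List.length_map]
        omega

def eltOf : Vtx → Option (List ℕ)
  | .elt a => some a
  | _ => none

lemma pre_red {α : Type*} (f : α → List ℕ) :
    ∀ (xs : List α) (g : α → List Vtx),
    (∀ x ∈ xs, ∃ tl, g x = Vtx.elt (f x) :: tl ∧ tl.length ≤ 2 ∧ ∀ v ∈ tl, eltOf v = none) →
    ∀ l, l <+: xs.flatMap g →
      l.filterMap eltOf <+: xs.map f ∧ l.length ≤ 3 * (l.filterMap eltOf).length := by
  intro xs
  induction xs with
  | nil =>
    intro g hg l hl
    simp only [List.flatMap_nil] at hl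
    have : l = [] := List.eq_nil_of_prefix_nil hl
    subst this; simp
  | cons x xs ih =>
    intro g hg l hl
    obtain ⟨tl, hgx, htl2, htlnone⟩ := hg x (List.mem_cons_self)
    rw [List.flatMap_cons, hgx] at hl
    rcases prefix_append_cases (x := Vtx.elt (f x) :: tl) hl with hpre | ⟨l2, rfl, hl2⟩
    · rcases l with _ | ⟨b, l'⟩
      · simp
      · rw [List.cons_prefix_cons] at hpre
        obtain ⟨rfl, hpre⟩ := hpre
        have hl'none : l'.filterMap eltOf = [] := by
          rw [List.filterMap_eq_nil_iff]
          exact fun v hv => htlnone v (hpre.subset hv)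
        constructor
        · rw [List.map_cons, List.filterMap_cons]
          simp only [eltOf, hl'none]
          exact List.prefix_iff_eq_take.mpr (by simp)
        · have := hpre.length_le
          rw [List.filterMap_cons]
          simp only [eltOf, hl'none]
          simp only [List.length_cons, List.length_singleton]
          omega
    · obtain ⟨h1, h2⟩ := ih g (fun y hy => hg y (List.mem_cons_of_mem _ hy)) l2 hl2
      have hfil : ((Vtx.elt (f x) :: tl) ++ l2).filterMap eltOf = f x :: l2.filterMap eltOf := by
        rw [List.filterMap_append, List.filterMap_cons]
        have : tl.filterMap eltOf = [] := List.filterMap_eq_nil_iff.mpr htlnone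
        simp [eltOf, this]
      rw [hfil]
      constructor
      · rw [List.map_cons]
        exact (List.cons_prefix_cons).mpr ⟨rfl, h1⟩
      · simp only [List.length_append, List.length_cons]
        omega

lemma main_red {α : Type*} (f : α → List ℕ) :
    ∀ (xs : List α) (g : α → List Vtx),
    (∀ x ∈ xs, ∃ tl, g x = Vtx.elt (f x) :: tl ∧ tl.length ≤ 2 ∧ ∀ v ∈ tl, eltOf v = none) →
    ∀ l, l <:+: xs.flatMap g →
      l.filterMap eltOf <:+: xs.map f ∧ l.length ≤ 3 * (l.filterMap eltOf).length + 2 := by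
  intro xs
  induction xs with
  | nil =>
    intro g hg l hl
    simp only [List.flatMap_nil] at hl
    have : l = [] := List.eq_nil_of_infix_nil hl
    subst this; simp
  | cons x xs ih =>
    intro g hg l hl
    obtain ⟨tl, hgx, htl2, htlnone⟩ := hg x (List.mem_cons_self)
    rw [List.flatMap_cons, hgx] at hl
    have hgrest : ∀ x ∈ xs, ∃ tl, g x = Vtx.elt (f x) :: tl ∧ tl.length ≤ 2 ∧
        ∀ v ∈ tl, eltOf v = none := fun y hy => hg y (List.mem_cons_of_mem _ hy)
    rw [show (Vtx.elt (f x) :: tl) ++ xs.flatMap g = Vtx.elt (f x) :: (tl ++ xs.flatMap g)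
      from rfl] at hl
    rcases List.infix_cons_iff.mp hl with hpre | hinf2
    · -- l <+: elt :: (tl ++ flatMap)
      rcases l with _ | ⟨b, l'⟩
      · simp
      rw [List.cons_prefix_cons] at hpre
      obtain ⟨rfl, hpre⟩ := hpre
      rcases prefix_append_cases hpre with hp1 | ⟨l2, rfl, hl2⟩
      · have hl'none : l'.filterMap eltOf = [] := by
          rw [List.filterMap_eq_nil_iff]
          exact fun v hv => htlnone v (hp1.subset hv)
        constructor
        · rw [List.filterMap_cons, List.map_cons]
          simp only [eltOf, hl'none]
          exact (List.prefix_iff_eq_take.mpr (by simp)).isInfix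
        · have := hp1.length_le
          rw [List.filterMap_cons]
          simp only [eltOf, hl'none, List.length_cons, List.length_singleton]
          omega
      · obtain ⟨h1, h2⟩ := pre_red f xs g hgrest l2 hl2
        have hfil : (Vtx.elt (f x) :: (tl ++ l2)).filterMap eltOf
            = f x :: l2.filterMap eltOf := by
          rw [List.filterMap_cons, List.filterMap_append]
          have : tl.filterMap eltOf = [] := List.filterMap_eq_nil_iff.mpr htlnone
          simp [eltOf, this]
        rw [hfil]
        constructor
        · rw [List.map_cons]
          exact ((List.cons_prefix_cons).mpr ⟨rfl, h1⟩).isInfix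
        · simp only [List.length_cons, List.length_append]
          omega
    · rcases infix_append_cases hinf2 with h1 | h2 | ⟨l1, l2, rfl, hs, hp⟩
      · -- l <:+: tl
        have hlnone : l.filterMap eltOf = [] := by
          rw [List.filterMap_eq_nil_iff]
          exact fun v hv => htlnone v (h1.subset hv)
        have := h1.length_le
        rw [hlnone]
        exact ⟨List.nil_infix, by omega⟩
      · -- l <:+: flatMap
        obtain ⟨h1, h2⟩ := ih g hgrest l h2
        exact ⟨h1.trans (by rw [List.map_cons]; exact (List.suffix_cons _ _).isInfix), h2⟩
      · -- l = l1 ++ l2, l1 <:+ tl, l2 <+: flatMap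
        obtain ⟨h1, h2⟩ := pre_red f xs g hgrest l2 hp
        have hl1none : l1.filterMap eltOf = [] := by
          rw [List.filterMap_eq_nil_iff]
          exact fun v hv => htlnone v (hs.subset hv)
        have hfil : (l1 ++ l2).filterMap eltOf = l2.filterMap eltOf := by
          rw [List.filterMap_append, hl1none, List.nil_append]
        rw [hfil]
        have hlen1 : l1.length ≤ 2 := le_trans hs.length_le htl2
        constructor
        · exact (h1.isInfix).trans (by rw [List.map_cons]; exact (List.suffix_cons _ _).isInfix)
        · simp only [List.length_append]
          omega

lemma zipIdx_swap_snd {α : Type*} (l : List α) : (l.zipIdx.map Prod.swap).map Prod.snd = l := by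
  rw [List.map_map]; exact List.zipIdx_map_fst 0 l

lemma elt_mem_pathList (d : ℕ) {a : List ℕ} (ha : a ∈ Tl d) : Vtx.elt a ∈ pathList d := by
  have h : a ∈ ((Tl d).zipIdx.map Prod.swap).map Prod.snd := by rw [zipIdx_swap_snd]; exact ha
  obtain ⟨p, hp, hpa⟩ := List.mem_map.mp h
  unfold pathList
  refine List.mem_flatMap.mpr ⟨p, hp, ?_⟩
  rw [hpa]
  exact List.mem_cons_self

lemma card_lower (d : ℕ) : (Tl d).length ≤ (VSet d).card := by
  have hinj : Function.Injective Vtx.elt := fun a b h => by injection h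
  have hsub : (Tl d).toFinset.image Vtx.elt ⊆ VSet d := by
    intro v hv
    obtain ⟨a, ha, rfl⟩ := Finset.mem_image.mp hv
    rw [List.mem_toFinset] at ha
    exact Finset.mem_union_left _ (List.mem_toFinset.mpr (elt_mem_pathList d ha))
  calc (Tl d).length = (Tl d).toFinset.card := (List.toFinset_card_of_nodup (nodup_Tl d)).symm
    _ = ((Tl d).toFinset.image Vtx.elt).card := (Finset.card_image_of_injective _ hinj).symm
    _ ≤ _ := Finset.card_le_card hsub

lemma twelve_le_pow : ∀ p : ℕ, 12 * (p + 5) ≤ 2^(p+6) := by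
  intro p
  induction p with
  | zero => norm_num
  | succ q ih =>
    have h64 : 64 ≤ 2^(q+6) := by
      calc (64:ℕ) = 2^6 := by norm_num
      _ ≤ 2^(q+6) := Nat.pow_le_pow_right (by norm_num) (by omega)
    have h2 : 2^(q+1+6) = 2 * 2^(q+6) := by ring
    omega

lemma pathList_blocks (d : ℕ) : ∀ p ∈ (Tl d).zipIdx.map Prod.swap,
    ∃ tl, (Vtx.elt p.2 :: (match (Tl d)[p.1 + 1]? with
      | none => []
      | some b => if p.2.length = b.length then [Vtx.sub p.1 0, Vtx.sub p.1 1]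
        else [Vtx.sub p.1 0])) = Vtx.elt p.2 :: tl ∧ tl.length ≤ 2 ∧
      ∀ v ∈ tl, eltOf v = none := by
  intro p _
  rcases hb : (Tl d)[p.1 + 1]? with _ | b
  · exact ⟨[], rfl, by simp, by simp⟩
  · by_cases hl : p.2.length = b.length
    · refine ⟨[Vtx.sub p.1 0, Vtx.sub p.1 1], by simp [hl], by simp, ?_⟩
      intro v hv
      simp only [List.mem_cons, List.not_mem_nil, or_false] at hv
      rcases hv with rfl | rfl <;> rfl
    · refine ⟨[Vtx.sub p.1 0], by simp [hl], by simp, ?_⟩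
      intro v hv
      simp only [List.mem_singleton] at hv
      subst hv; rfl

/-- If `0 < c < 1`, `d > 2⌊log₂(1/c)⌋ + 4` and `P` is a subpath of
`P_d` with `|V(P)| ≥ c·|V(G_d)|`, then `P` meets every `S_j` for
`⌊log₂(1/c)⌋ + 3 ≤ j ≤ d`. -/
theorem stmt14 (d : ℕ) (c : ℝ) (hc0 : 0 < c) (hc1 : c < 1)
    (hd : 2 * ⌊Real.logb 2 (1 / c)⌋ + 4 < (d : ℤ))
    (l : List Vtx) (hsub : l <:+: pathList d)
    (hlen : c * ((VSet d).card : ℝ) ≤ (l.length : ℝ)) :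
    ∀ j : ℕ, ⌊Real.logb 2 (1 / c)⌋ + 3 ≤ (j : ℤ) → j ≤ d →
      ∃ a, Vtx.elt a ∈ l ∧ a.length = j := by
  intro j hj1 hj2
  by_contra hcon
  push_neg at hcon
  set n := (⌊Real.logb 2 (1/c)⌋).toNat with hn
  have h1c : (1:ℝ) ≤ 1/c := by
    rw [le_div_iff₀ hc0]; linarith
  have hL0 : (0:ℤ) ≤ ⌊Real.logb 2 (1/c)⌋ :=
    Int.le_floor.mpr (by simpa using Real.logb_nonneg (by norm_num) h1c)
  have hLn : ((n:ℤ)) = ⌊Real.logb 2 (1/c)⌋ := Int.toNat_of_nonneg hL0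
  rw [← hLn] at hj1 hd
  have hjn : n + 3 ≤ j := by omega
  have hdn : 2*n + 5 ≤ d := by omega
  have hkey : 1 < c * 2^(n+1) := by
    have h1 : Real.logb 2 (1/c) < (n:ℝ) + 1 := by
      have h := Int.lt_floor_add_one (Real.logb 2 (1/c))
      rw [← hLn] at h
      exact_mod_cast h
    have h2 : (1:ℝ)/c < 2^((n:ℝ)+1) :=
      (Real.logb_lt_iff_lt_rpow (by norm_num) (by positivity)).mp h1
    have h3 : (2:ℝ)^((n:ℝ)+1) = 2^(n+1) := by
      rw [show ((n:ℝ)+1) = ((n+1:ℕ):ℝ) by push_cast; ring, Real.rpow_natCast]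
    rw [h3] at h2
    have h4 := (div_lt_iff₀ hc0).mp h2
    nlinarith
  have hsub' : l <:+: ((Tl d).zipIdx.map Prod.swap).flatMap (fun p =>
      Vtx.elt p.2 :: (match (Tl d)[p.1 + 1]? with
        | none => []
        | some b => if p.2.length = b.length then [Vtx.sub p.1 0, Vtx.sub p.1 1]
          else [Vtx.sub p.1 0])) := hsub
  obtain ⟨hinfix, hlen3⟩ := main_red Prod.snd ((Tl d).zipIdx.map Prod.swap) _ (pathList_blocks d) l hsub'
  rw [zipIdx_swap_snd] at hinfix
  set t := l.filterMap eltOf with ht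
  have havt : ∀ a ∈ t, a.length ≠ j := by
    intro a ha
    obtain ⟨v, hvl, hva⟩ := List.mem_filterMap.mp ha
    cases v with
    | elt b =>
      have hba : b = a := by simpa [eltOf] using hva
      subst hba
      exact hcon b hvl
    | sub i k => simp [eltOf] at hva
    | ctr k => simp [eltOf] at hva
  have hbound := tl_infix_bound d j t (by omega) hj2 hinfix havt
  have hcase : l.length * 2^(n+1) + 4 ≤ 2^(d+2) := by
    have h2dj : (1:ℕ) ≤ 2^(d-j) := Nat.one_le_two_pow
    rcases le_max_iff.mp hbound with hcas | hcas
    · have hlen12 : l.length ≤ 12 * 2^(d-j) := by omega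
      have hmul : 2^(d-j) * 2^(n+1) = 2^((d-j)+(n+1)) := (pow_add 2 _ _).symm
      have hexp : (d-j)+(n+1) ≤ d-2 := by omega
      have hmono : 2^((d-j)+(n+1)) ≤ 2^(d-2) := Nat.pow_le_pow_right (by norm_num) hexp
      have h16 : 2^(d+2) = 16 * 2^(d-2) := by
        rw [show d+2 = (d-2)+4 by omega, pow_add]; ring
      have hone2 : (1:ℕ) ≤ 2^(d-2) := Nat.one_le_two_pow
      calc l.length * 2^(n+1) + 4 ≤ (12 * 2^(d-j)) * 2^(n+1) + 4 := by
            have := mul_le_mul_left hlen12 (2^(n+1)); omega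
        _ = 12 * (2^(d-j) * 2^(n+1)) + 4 := by ring
        _ ≤ 12 * 2^(d-2) + 4 := by
            have h5 : 2^(d-j) * 2^(n+1) ≤ 2^(d-2) := by rw [hmul]; exact hmono
            have := mul_le_mul_right h5 12; omega
        _ ≤ 2^(d+2) := by omega
    · have haux := twelve_le_pow (d-n-5)
      have haux2 : 12 * (d-n) ≤ 2^((d-n)+1) := by
        rw [show (d-n-5)+5 = d-n by omega, show (d-n-5)+6 = (d-n)+1 by omega] at haux
        exact haux
      have hsplit : 2^(d+2) = 2^((d-n)+1) * 2^(n+1) := by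
        rw [← pow_add]; congr 1; omega
      have h2n : (2:ℕ) ≤ 2^(n+1) := by
        calc (2:ℕ) = 2^1 := rfl
        _ ≤ 2^(n+1) := Nat.pow_le_pow_right (by norm_num) (by omega)
      have hd2 : l.length + 2 ≤ 12 * (d - n) := by omega
      calc l.length * 2^(n+1) + 4 ≤ (l.length + 2) * 2^(n+1) := by
            rw [add_mul]; omega
        _ ≤ (12*(d-n)) * 2^(n+1) := mul_le_mul_left hd2 _
        _ ≤ 2^((d-n)+1) * 2^(n+1) := mul_le_mul_left haux2 _
        _ = 2^(d+2) := hsplit.symm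
  have hTl : (Tl d).length = 2^(d+2) - 4 := length_Tl d
  have hNcard := card_lower d
  have h4le : (4:ℕ) ≤ 2^(d+2) := by
    calc (4:ℕ) = 2^2 := by norm_num
    _ ≤ 2^(d+2) := Nat.pow_le_pow_right (by norm_num) (by omega)
  have hTlR : ((Tl d).length : ℝ) = 2^(d+2) - 4 := by
    rw [hTl, Nat.cast_sub h4le]; push_cast; ring
  have hlenR : (l.length : ℝ) * 2^(n+1) + 4 ≤ 2^(d+2) := by exact_mod_cast hcase
  have hTpos : 1 ≤ (Tl d).length := by
    have h128 : (128:ℕ) ≤ 2^(d+2) := by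
      calc (128:ℕ) = 2^7 := by norm_num
      _ ≤ _ := Nat.pow_le_pow_right (by norm_num) (by omega)
    omega
  have hT0 : (0:ℝ) < ((Tl d).length : ℝ) := by exact_mod_cast hTpos
  have hmul2 : (l.length:ℝ) * 2^(n+1) ≤ ((Tl d).length : ℝ) := by rw [hTlR]; linarith
  have hlt : (l.length : ℝ) < c * ((Tl d).length : ℝ) := by
    have hp : (0:ℝ) < 2^(n+1) := by positivity
    have hq : ((Tl d).length:ℝ) * 1 < ((Tl d).length:ℝ) * (c * 2^(n+1)) :=
      mul_lt_mul_of_pos_left hkey hT0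
    have hr : (l.length:ℝ) * 2^(n+1) < (c * ((Tl d).length:ℝ)) * 2^(n+1) := by nlinarith
    exact lt_of_mul_lt_mul_right hr hp.le
  have hfin : c * ((Tl d).length:ℝ) ≤ (l.length:ℝ) := by
    calc c * ((Tl d).length:ℝ) ≤ c * ((VSet d).card : ℝ) := by
          apply mul_le_mul_of_nonneg_left _ hc0.le
          exact_mod_cast hNcard
    _ ≤ l.length := hlen
  linarith
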